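/- Fix (ε,d) ∈ {(1,1),(−1,0),(1,0)} and r ≥ r₁. For every p = (p₀,…,p₄) ∈ P_r^{(5)} and every function f : ℂ × ℂ → ℝ, writing (a₁,a₂,b₁,b₂,c₁) = (α₁(p),α₂(p),β₁(p),β₂(p),γ₁(p)) and ∂_i p for the 4-tuple obtained from p by deleting its i-th entry, one has Σ_{i=0}^{4} (−1)^i · f(CR₁(∂_i p), CR₂(∂_i p)) = f(ε·a₁c₁/(a₂b₁), c₁/a₂) − f(c₁/b₁, ε·b₂c₁/(a₂b₁)) + f(c₁, ε·a₁b₂c₁/(a₂b₁)) − f(b₁,b₂) + f(a₁,a₂). -/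
import Mathlib


noncomputable section

open scoped Classical

namespace DCM

/-- `Vc r d` is `ℂ^(2r+d)`, with coordinates taken in the ordered basis
`e_r, …, e_1, (h), f_1, …, f_r` (the middle vector `h` being present only if `d = 1`). -/
abbrev Vc (r d : ℕ) := Fin (2 * r + d) → ℂ

/-- `e_i` for `1 ≤ i ≤ r`: the standard basis vector at position `r - i`. -/
def eV (r d i : ℕ) : Vc r d := fun k => if (k : ℕ) = r - i then 1 else 0

/-- `h`: the standard basis vector at position `r` (relevant only when `d = 1`). -/
def hV (r d : ℕ) : Vc r d := fun k => if (k : ℕ) = r then 1 else 0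

/-- `f_i` for `1 ≤ i ≤ r`: the standard basis vector at position `r + d + i - 1`. -/
def fV (r d i : ℕ) : Vc r d := fun k => if (k : ℕ) = r + d + i - 1 then 1 else 0

/-- The ε-symmetric bilinear form ω on `Vc r d`, determined by `ω(e_i,f_j) = δ_ij`,
`ω(f_i,e_j) = ε·δ_ij`, `ω(e_i,e_j) = ω(f_i,f_j) = 0`, and (when `d = 1`)
`ω(h,h) = 1` and `h` orthogonal to all `e_i`, `f_i`. -/
def om (ε : ℂ) (r d : ℕ) (v w : Vc r d) : ℂ :=
  (∑ j : Fin r,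
    (v ⟨r - 1 - (j : ℕ), by have := j.isLt; omega⟩ *
        w ⟨r + d + (j : ℕ), by have := j.isLt; omega⟩ +
      ε * v ⟨r + d + (j : ℕ), by have := j.isLt; omega⟩ *
        w ⟨r - 1 - (j : ℕ), by have := j.isLt; omega⟩)) +
  (if hd : d = 1 then v ⟨r, by omega⟩ * w ⟨r, by omega⟩ else 0)

/-- `v` is a nonzero isotropic vector, i.e. it represents a line `[v] ∈ P_r`. -/
def IsoV (ε : ℂ) (r d : ℕ) (v : Vc r d) : Prop := v ≠ 0 ∧ om ε r d v v = 0

/-- `g` lies in `G_r`, the group of linear automorphisms preserving ω. -/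
def InG (ε : ℂ) (r d : ℕ) (g : Vc r d ≃ₗ[ℂ] Vc r d) : Prop :=
  ∀ v w, om ε r d (g v) (g w) = om ε r d v w

/-- The ω-cross-ratio `CR₀`. -/
def CR0 (ε : ℂ) (r d : ℕ) (v0 v1 v2 v3 : Vc r d) : ℂ :=
  (om ε r d v0 v2 * om ε r d v1 v3) / (om ε r d v0 v3 * om ε r d v1 v2)

/-- The ω-cross-ratio `CR₁`. -/
def CR1 (ε : ℂ) (r d : ℕ) (v0 v1 v2 v3 : Vc r d) : ℂ := (CR0 ε r d v1 v2 v0 v3)⁻¹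

/-- The ω-cross-ratio `CR₂`. -/
def CR2 (ε : ℂ) (r d : ℕ) (v0 v1 v2 v3 : Vc r d) : ℂ := CR0 ε r d v2 v0 v1 v3

/-- `(v0,v1,v2,v3)` represents a tuple of lines in `P_r^{(4)}`:
all lines isotropic and pairwise non-orthogonal. -/
def Conf4 (ε : ℂ) (r d : ℕ) (v0 v1 v2 v3 : Vc r d) : Prop :=
  IsoV ε r d v0 ∧ IsoV ε r d v1 ∧ IsoV ε r d v2 ∧ IsoV ε r d v3 ∧
  om ε r d v0 v1 ≠ 0 ∧ om ε r d v0 v2 ≠ 0 ∧ om ε r d v0 v3 ≠ 0 ∧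
  om ε r d v1 v2 ≠ 0 ∧ om ε r d v1 v3 ≠ 0 ∧ om ε r d v2 v3 ≠ 0

/-- `(v0,…,v4)` represents a tuple of lines in `P_r^{(5)}`. -/
def Conf5 (ε : ℂ) (r d : ℕ) (v0 v1 v2 v3 v4 : Vc r d) : Prop :=
  Conf4 ε r d v0 v1 v2 v3 ∧ IsoV ε r d v4 ∧
  om ε r d v0 v4 ≠ 0 ∧ om ε r d v1 v4 ≠ 0 ∧ om ε r d v2 v4 ≠ 0 ∧ om ε r d v3 v4 ≠ 0

/-- ω restricted to the span of `s` is nondegenerate. -/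
def NondegOn (ε : ℂ) (r d : ℕ) (s : Set (Vc r d)) : Prop :=
  ∀ x ∈ Submodule.span ℂ s, (∀ y ∈ Submodule.span ℂ s, om ε r d x y = 0) → x = 0

/-- `(v0,v1,v2,v3)` represents a tuple of lines in `P_r^{{4}}`: pairwise non-orthogonal
isotropic lines, linearly independent, spanning a nondegenerate subspace. -/
def Gen4 (ε : ℂ) (r d : ℕ) (v0 v1 v2 v3 : Vc r d) : Prop :=
  Conf4 ε r d v0 v1 v2 v3 ∧ LinearIndependent ℂ ![v0, v1, v2, v3] ∧
  NondegOn ε r d {v0, v1, v2, v3}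

/-- `(v0,…,v4)` represents a tuple of lines in `P_r^{{5}}`: every 4-element subtuple
(in the induced order) lies in `P_r^{{4}}`. -/
def Gen5 (ε : ℂ) (r d : ℕ) (v0 v1 v2 v3 v4 : Vc r d) : Prop :=
  Conf5 ε r d v0 v1 v2 v3 v4 ∧
  Gen4 ε r d v0 v1 v2 v3 ∧ Gen4 ε r d v0 v1 v2 v4 ∧ Gen4 ε r d v0 v1 v3 v4 ∧
  Gen4 ε r d v0 v2 v3 v4 ∧ Gen4 ε r d v1 v2 v3 v4

/-- `Γ(z₁,z₂) = 1 - z₁ - z₂`. -/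
def Gam (z1 z2 : ℂ) : ℂ := 1 - z1 - z2

/-- `Δ(z₁,z₂) = Γ(z₁,z₂)² - 2(1+ε)·z₁z₂`. -/
def Del (ε z1 z2 : ℂ) : ℂ := Gam z1 z2 ^ 2 - 2 * (1 + ε) * z1 * z2

/-- `Δ^{1/2}`, relative to a fixed choice `sq` of complex square root:
`Γ` if `ε = -1`, and `sq ∘ Δ` otherwise. -/
def DelHalf (ε : ℂ) (sq : ℂ → ℂ) (z1 z2 : ℂ) : ℂ :=
  if ε = -1 then Gam z1 z2 else sq (Del ε z1 z2)

/-- `φ₊ = (Δ^{1/2} + Γ)/2`. -/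
def phiP (ε : ℂ) (sq : ℂ → ℂ) (z1 z2 : ℂ) : ℂ := (DelHalf ε sq z1 z2 + Gam z1 z2) / 2

/-- `φ₋ = (Δ^{1/2} - Γ)/2`. -/
def phiM (ε : ℂ) (sq : ℂ → ℂ) (z1 z2 : ℂ) : ℂ := (DelHalf ε sq z1 z2 - Gam z1 z2) / 2


lemma om_swap (ε : ℂ) (r d : ℕ) (hε : ε = 1 ∨ ε = -1) (hd : d = 1 → ε = 1)
    (v w : Vc r d) : om ε r d w v = ε * om ε r d v w := by
  unfold om
  rcases hε with h | h <;> subst h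
  · rw [mul_add, Finset.mul_sum]
    congr 1
    · exact Finset.sum_congr rfl fun j _ => by ring
    · split <;> ring
  · have hd0 : ¬ d = 1 := fun hh => by have := hd hh; norm_num at this
    rw [dif_neg hd0, add_zero, dif_neg hd0, add_zero, Finset.mul_sum]
    exact Finset.sum_congr rfl fun j _ => by ring

set_option maxHeartbeats 1600000 in
/-- The alternating sum of `f ∘ (CR₁, CR₂)` over the five faces of a
tuple in `P_r^{(5)}` equals the five-term expression in the cross-ratio coordinates
`(a₁,a₂,b₁,b₂,c₁) = (α₁,α₂,β₁,β₂,γ₁)`. -/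
theorem statement_14 (ε : ℂ) (d : ℕ)
    (hεd : (ε = 1 ∧ d = 1) ∨ (ε = -1 ∧ d = 0) ∨ (ε = 1 ∧ d = 0))
    (r : ℕ) (hr1 : 1 ≤ r) (hr2 : ε = 1 ∧ d = 0 → 2 ≤ r)
    (v0 v1 v2 v3 v4 : Vc r d) (hp : Conf5 ε r d v0 v1 v2 v3 v4)
    (f : ℂ × ℂ → ℝ)
    (a1 a2 b1 b2 c1 : ℂ)
    (ha1 : a1 = CR1 ε r d v0 v1 v2 v3) (ha2 : a2 = CR2 ε r d v0 v1 v2 v3)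
    (hb1 : b1 = CR1 ε r d v0 v1 v2 v4) (hb2 : b2 = CR2 ε r d v0 v1 v2 v4)
    (hc1 : c1 = CR1 ε r d v0 v1 v3 v4) :
    f (CR1 ε r d v1 v2 v3 v4, CR2 ε r d v1 v2 v3 v4)
      - f (CR1 ε r d v0 v2 v3 v4, CR2 ε r d v0 v2 v3 v4)
      + f (CR1 ε r d v0 v1 v3 v4, CR2 ε r d v0 v1 v3 v4)
      - f (CR1 ε r d v0 v1 v2 v4, CR2 ε r d v0 v1 v2 v4)
      + f (CR1 ε r d v0 v1 v2 v3, CR2 ε r d v0 v1 v2 v3)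
    = f (ε * a1 * c1 / (a2 * b1), c1 / a2)
        - f (c1 / b1, ε * b2 * c1 / (a2 * b1))
        + f (c1, ε * a1 * b2 * c1 / (a2 * b1))
        - f (b1, b2)
        + f (a1, a2) := by
  obtain ⟨⟨-, -, -, -, h01, h02, h03, h12, h13, h23⟩, -, h04, h14, h24, h34⟩ := hp
  have hε1 : ε = 1 ∨ ε = -1 := by
    rcases hεd with ⟨h, -⟩ | ⟨h, -⟩ | ⟨h, -⟩ <;> [left; right; left] <;> exact h
  have hεd' : d = 1 → ε = 1 := by
    rcases hεd with ⟨h, h'⟩ | ⟨h, h'⟩ | ⟨h, h'⟩ <;> subst h' <;>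
      first
      | exact fun _ => h
      | exact fun hh => absurd hh (by norm_num)
  have hs := om_swap ε r d hε1 hεd'
  have e1 : CR1 ε r d v1 v2 v3 v4 = ε * a1 * c1 / (a2 * b1) := by
    subst ha1 ha2 hb1 hb2 hc1
    simp only [CR1, CR2, CR0, inv_div, hs v0 v1, hs v0 v2, hs v0 v3, hs v0 v4,
      hs v1 v2, hs v1 v3, hs v1 v4, hs v2 v3, hs v2 v4, hs v3 v4]
    set x01 := om ε r d v0 v1 with hx01; clear_value x01
    set x02 := om ε r d v0 v2 with hx02; clear_value x02
    set x03 := om ε r d v0 v3 with hx03; clear_value x03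
    set x04 := om ε r d v0 v4 with hx04; clear_value x04
    set x12 := om ε r d v1 v2 with hx12; clear_value x12
    set x13 := om ε r d v1 v3 with hx13; clear_value x13
    set x14 := om ε r d v1 v4 with hx14; clear_value x14
    set x23 := om ε r d v2 v3 with hx23; clear_value x23
    set x24 := om ε r d v2 v4 with hx24; clear_value x24
    set x34 := om ε r d v3 v4 with hx34; clear_value x34
    rcases hε1 with h | h <;> subst h <;> field_simp <;>
      first
        | ring
        | (rw [eq_div_iff (by simp [neg_ne_zero, h01, h02, h03, h04, h12, h13, h14, h23, h24, h34])]; ring)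
        | ((try rw [neg_inj]); rw [inv_pow]; field_simp;
           try (rw [eq_div_iff (by simp [neg_ne_zero, h01, h02, h03, h04, h12, h13, h14, h23, h24, h34])]; ring))
  have e2 : CR2 ε r d v1 v2 v3 v4 = c1 / a2 := by
    subst ha1 ha2 hb1 hb2 hc1
    simp only [CR1, CR2, CR0, inv_div, hs v0 v1, hs v0 v2, hs v0 v3, hs v0 v4,
      hs v1 v2, hs v1 v3, hs v1 v4, hs v2 v3, hs v2 v4, hs v3 v4]
    set x01 := om ε r d v0 v1 with hx01; clear_value x01
    set x02 := om ε r d v0 v2 with hx02; clear_value x02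
    set x03 := om ε r d v0 v3 with hx03; clear_value x03
    set x04 := om ε r d v0 v4 with hx04; clear_value x04
    set x12 := om ε r d v1 v2 with hx12; clear_value x12
    set x13 := om ε r d v1 v3 with hx13; clear_value x13
    set x14 := om ε r d v1 v4 with hx14; clear_value x14
    set x23 := om ε r d v2 v3 with hx23; clear_value x23
    set x24 := om ε r d v2 v4 with hx24; clear_value x24
    set x34 := om ε r d v3 v4 with hx34; clear_value x34
    rcases hε1 with h | h <;> subst h <;> field_simp <;>
      first
        | ring
        | (rw [eq_div_iff (by simp [neg_ne_zero, h01, h02, h03, h04, h12, h13, h14, h23, h24, h34])]; ring)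
        | ((try rw [neg_inj]); rw [inv_pow]; field_simp;
           try (rw [eq_div_iff (by simp [neg_ne_zero, h01, h02, h03, h04, h12, h13, h14, h23, h24, h34])]; ring))
  have e3 : CR1 ε r d v0 v2 v3 v4 = c1 / b1 := by
    subst ha1 ha2 hb1 hb2 hc1
    simp only [CR1, CR2, CR0, inv_div, hs v0 v1, hs v0 v2, hs v0 v3, hs v0 v4,
      hs v1 v2, hs v1 v3, hs v1 v4, hs v2 v3, hs v2 v4, hs v3 v4]
    set x01 := om ε r d v0 v1 with hx01; clear_value x01
    set x02 := om ε r d v0 v2 with hx02; clear_value x02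
    set x03 := om ε r d v0 v3 with hx03; clear_value x03
    set x04 := om ε r d v0 v4 with hx04; clear_value x04
    set x12 := om ε r d v1 v2 with hx12; clear_value x12
    set x13 := om ε r d v1 v3 with hx13; clear_value x13
    set x14 := om ε r d v1 v4 with hx14; clear_value x14
    set x23 := om ε r d v2 v3 with hx23; clear_value x23
    set x24 := om ε r d v2 v4 with hx24; clear_value x24
    set x34 := om ε r d v3 v4 with hx34; clear_value x34
    rcases hε1 with h | h <;> subst h <;> field_simp <;>
      first
        | ring
        | (rw [eq_div_iff (by simp [neg_ne_zero, h01, h02, h03, h04, h12, h13, h14, h23, h24, h34])]; ring)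
        | ((try rw [neg_inj]); rw [inv_pow]; field_simp;
           try (rw [eq_div_iff (by simp [neg_ne_zero, h01, h02, h03, h04, h12, h13, h14, h23, h24, h34])]; ring))
  have e4 : CR2 ε r d v0 v2 v3 v4 = ε * b2 * c1 / (a2 * b1) := by
    subst ha1 ha2 hb1 hb2 hc1
    simp only [CR1, CR2, CR0, inv_div, hs v0 v1, hs v0 v2, hs v0 v3, hs v0 v4,
      hs v1 v2, hs v1 v3, hs v1 v4, hs v2 v3, hs v2 v4, hs v3 v4]
    set x01 := om ε r d v0 v1 with hx01; clear_value x01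
    set x02 := om ε r d v0 v2 with hx02; clear_value x02
    set x03 := om ε r d v0 v3 with hx03; clear_value x03
    set x04 := om ε r d v0 v4 with hx04; clear_value x04
    set x12 := om ε r d v1 v2 with hx12; clear_value x12
    set x13 := om ε r d v1 v3 with hx13; clear_value x13
    set x14 := om ε r d v1 v4 with hx14; clear_value x14
    set x23 := om ε r d v2 v3 with hx23; clear_value x23
    set x24 := om ε r d v2 v4 with hx24; clear_value x24
    set x34 := om ε r d v3 v4 with hx34; clear_value x34
    rcases hε1 with h | h <;> subst h <;> field_simp <;>
      first
        | ring
        | (rw [eq_div_iff (by simp [neg_ne_zero, h01, h02, h03, h04, h12, h13, h14, h23, h24, h34])]; ring)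
        | ((try rw [neg_inj]); rw [inv_pow]; field_simp;
           try (rw [eq_div_iff (by simp [neg_ne_zero, h01, h02, h03, h04, h12, h13, h14, h23, h24, h34])]; ring))
  have e5 : CR2 ε r d v0 v1 v3 v4 = ε * a1 * b2 * c1 / (a2 * b1) := by
    subst ha1 ha2 hb1 hb2 hc1
    simp only [CR1, CR2, CR0, inv_div, hs v0 v1, hs v0 v2, hs v0 v3, hs v0 v4,
      hs v1 v2, hs v1 v3, hs v1 v4, hs v2 v3, hs v2 v4, hs v3 v4]
    set x01 := om ε r d v0 v1 with hx01; clear_value x01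
    set x02 := om ε r d v0 v2 with hx02; clear_value x02
    set x03 := om ε r d v0 v3 with hx03; clear_value x03
    set x04 := om ε r d v0 v4 with hx04; clear_value x04
    set x12 := om ε r d v1 v2 with hx12; clear_value x12
    set x13 := om ε r d v1 v3 with hx13; clear_value x13
    set x14 := om ε r d v1 v4 with hx14; clear_value x14
    set x23 := om ε r d v2 v3 with hx23; clear_value x23
    set x24 := om ε r d v2 v4 with hx24; clear_value x24
    set x34 := om ε r d v3 v4 with hx34; clear_value x34
    rcases hε1 with h | h <;> subst h <;> field_simp <;>
      rw [eq_div_iff (by simp [neg_ne_zero, h01, h02, h03, h04, h12, h13, h14, h23, h24, h34])] <;> ring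
  rw [e1, e2, e3, e4, e5, ← ha1, ← ha2, ← hb1, ← hb2, ← hc1]
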